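/- Let N₁, N₂ ≥ 1 be integers, h₁, h₂, Δt > 0, and a ∈ ℝ with a ≠ 0. Let u₁, u₂ : (ℤ/N₁ℤ) × (ℤ/N₂ℤ) → ℝ be grid functions and define the discrete central divergence D(i,j) := (u₁(i+1,j) − u₁(i−1,j))/(2h₁) + (u₂(i,j+1) − u₂(i,j−1))/(2h₂). Suppose r, s ∈ ℝ with s ≠ 0 satisfy, for all grid indices (i,j), the relation s = r − Δt · a · s · D(i,j). Then s = r and D(i,j) = 0 for all (i,j). -/
import Mathlib


/-- Core argument in Theorems 6.1 and 6.3 (fully-discrete scheme): on a periodic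
Cartesian grid `(ℤ/N₁ℤ) × (ℤ/N₂ℤ)`, if a constant `s ≠ 0` satisfies the implicit
update relation `s = r − Δt·a·s·D(i,j)` with `D` the discrete central divergence of
a grid velocity field, then `s = r` and the discrete divergence vanishes on the
whole grid. -/
theorem stmt_7 (N₁ N₂ : ℕ) (hN₁ : 1 ≤ N₁) (hN₂ : 1 ≤ N₂)
    (h₁ h₂ Δt : ℝ) (hh₁ : 0 < h₁) (hh₂ : 0 < h₂) (hΔt : 0 < Δt)
    (a : ℝ) (ha : a ≠ 0)
    (u₁ u₂ : ZMod N₁ → ZMod N₂ → ℝ) (r s : ℝ) (hs : s ≠ 0)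
    (hrel : ∀ (i : ZMod N₁) (j : ZMod N₂),
      s = r - Δt * a * s *
        ((u₁ (i + 1) j - u₁ (i - 1) j) / (2 * h₁)
          + (u₂ i (j + 1) - u₂ i (j - 1)) / (2 * h₂))) :
    s = r ∧ ∀ (i : ZMod N₁) (j : ZMod N₂),
      (u₁ (i + 1) j - u₁ (i - 1) j) / (2 * h₁)
        + (u₂ i (j + 1) - u₂ i (j - 1)) / (2 * h₂) = 0 := by
  have hN₁' : NeZero N₁ := ⟨by omega⟩
  have hN₂' : NeZero N₂ := ⟨by omega⟩
  have hne : Δt * a * s ≠ 0 := by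
    intro h
    rcases mul_eq_zero.mp h with h' | h'
    · rcases mul_eq_zero.mp h' with h'' | h''
      · exact absurd h'' (ne_of_gt hΔt)
      · exact ha h''
    · exact hs h'
  set c : ℝ := (r - s) / (Δt * a * s) with hc
  have hD : ∀ (i : ZMod N₁) (j : ZMod N₂),
      (u₁ (i + 1) j - u₁ (i - 1) j) / (2 * h₁)
        + (u₂ i (j + 1) - u₂ i (j - 1)) / (2 * h₂) = c := by
    intro i j
    rw [hc, eq_div_iff hne]
    linear_combination hrel i j
  have hsum1 : ∀ j : ZMod N₂,
      ∑ i : ZMod N₁, u₁ (i + 1) j = ∑ i : ZMod N₁, u₁ (i - 1) j := fun j =>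
    Fintype.sum_equiv (Equiv.addRight (2 : ZMod N₁)) _ _
      (fun i => by simp only [Equiv.coe_addRight]; congr 1; ring)
  have hsum2 : ∀ i : ZMod N₁,
      ∑ j : ZMod N₂, u₂ i (j + 1) = ∑ j : ZMod N₂, u₂ i (j - 1) := fun i =>
    Fintype.sum_equiv (Equiv.addRight (2 : ZMod N₂)) _ _
      (fun j => by simp only [Equiv.coe_addRight]; congr 1; ring)
  have htot : (0:ℝ) = (N₁ * N₂ : ℝ) * c := by
    have lhs : ∑ i : ZMod N₁, ∑ j : ZMod N₂,
        ((u₁ (i + 1) j - u₁ (i - 1) j) / (2 * h₁)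
          + (u₂ i (j + 1) - u₂ i (j - 1)) / (2 * h₂)) = 0 := by
      simp only [Finset.sum_add_distrib]
      have e1 : ∀ j : ZMod N₂,
          ∑ i : ZMod N₁, (u₁ (i + 1) j - u₁ (i - 1) j) / (2 * h₁) = 0 := by
        intro j
        rw [← Finset.sum_div, Finset.sum_sub_distrib, hsum1 j, sub_self, zero_div]
      have e2 : ∀ i : ZMod N₁,
          ∑ j : ZMod N₂, (u₂ i (j + 1) - u₂ i (j - 1)) / (2 * h₂) = 0 := by
        intro i
        rw [← Finset.sum_div, Finset.sum_sub_distrib, hsum2 i, sub_self, zero_div]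
      rw [Finset.sum_comm (f := fun i j => (u₁ (i + 1) j - u₁ (i - 1) j) / (2 * h₁))]
      simp [e1, e2]
    calc (0:ℝ) = ∑ i : ZMod N₁, ∑ j : ZMod N₂,
        ((u₁ (i + 1) j - u₁ (i - 1) j) / (2 * h₁)
          + (u₂ i (j + 1) - u₂ i (j - 1)) / (2 * h₂)) := lhs.symm
      _ = (N₁ * N₂ : ℝ) * c := by
          simp [hD, Finset.sum_const, ZMod.card, mul_assoc]
  have hNpos : (0:ℝ) < (N₁ : ℝ) * (N₂ : ℝ) := by
    have : (0:ℝ) < (N₁ : ℝ) := by exact_mod_cast Nat.lt_of_lt_of_le Nat.zero_lt_one hN₁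
    have : (0:ℝ) < (N₂ : ℝ) := by exact_mod_cast Nat.lt_of_lt_of_le Nat.zero_lt_one hN₂
    positivity
  have hc0 : c = 0 := by
    rcases mul_eq_zero.mp htot.symm with h | h
    · exact absurd h hNpos.ne'
    · exact h
  have hDz : ∀ (i : ZMod N₁) (j : ZMod N₂),
      (u₁ (i + 1) j - u₁ (i - 1) j) / (2 * h₁)
        + (u₂ i (j + 1) - u₂ i (j - 1)) / (2 * h₂) = 0 := by
    intro i j; rw [hD i j, hc0]
  refine ⟨?_, hDz⟩
  have h2 := hrel 0 0
  rw [hDz 0 0, mul_zero, sub_zero] at h2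
  exact h2
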